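/- For every integer k ≥ 0 and every complex number τ, the inequality |p_k(τ)| ≤ 4·(|τ|³ + 1)^k holds. -/

import Mathlib

open Complex

/-- `p_k(τ) = (1/(2πi)) ∮_{|t| = r} exp(Σ_{n=1}^∞ (1/n − τ²/(n+2)) (−τ t)^n) t^{−k−1} dt`,
where `r = 1/(|τ|³ + 1)`. -/
noncomputable def pFun (k : ℕ) (τ : ℂ) : ℂ :=
  (2 * Real.pi * Complex.I)⁻¹ *
    ∮ t in C(0, (‖τ‖ ^ 3 + 1)⁻¹),
      Complex.exp (∑' n : ℕ,
        (1 / ((n : ℂ) + 1) - τ ^ 2 / ((n : ℂ) + 3)) * (-τ * t) ^ (n + 1)) / t ^ (k + 1)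

/-- For every `k ≥ 0` and every `τ ∈ ℂ`, `|p_k(τ)| ≤ 4·(|τ|³ + 1)^k`. -/
theorem pFun_bound (k : ℕ) (τ : ℂ) :
    ‖pFun k τ‖ ≤ 4 * (‖τ‖ ^ 3 + 1) ^ k := by
  set x := ‖τ‖ with hx
  have hx0 : 0 ≤ x := norm_nonneg τ
  have hD : 0 < x ^ 3 - x + 1 := by nlinarith [sq_nonneg (x-1), sq_nonneg x]
  have hx1 : (0:ℝ) < x ^ 3 + 1 := by positivity
  set r : ℝ := (x ^ 3 + 1)⁻¹ with hr
  have hr0 : 0 < r := by positivity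
  set q : ℝ := x * r with hq
  have hq0 : 0 ≤ q := by positivity
  have hq1 : q < 1 := by
    rw [hq, hr, mul_inv_lt_iff₀ hx1]
    nlinarith
  -- the key pointwise bound on the circle
  have key : ∀ t ∈ Metric.sphere (0:ℂ) r,
      ‖Complex.exp (∑' n : ℕ,
        (1 / ((n : ℂ) + 1) - τ ^ 2 / ((n : ℂ) + 3)) * (-τ * t) ^ (n + 1)) / t ^ (k + 1)‖
        ≤ 4 * (r ^ (k + 1))⁻¹ := by
    intro t ht
    have htabs : ‖t‖ = r := by simpa using ht
    have htne : t ≠ 0 := by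
      intro h; rw [h] at htabs; simp at htabs; linarith
    have hwabs : ‖-τ * t‖ = q := by
      rw [norm_mul, norm_neg, htabs, hq]
    -- bound the exponent's norm
    have hnum : ‖Complex.exp (∑' n : ℕ,
        (1 / ((n : ℂ) + 1) - τ ^ 2 / ((n : ℂ) + 3)) * (-τ * t) ^ (n + 1))‖ ≤ 4 := by
      set w := -τ * t with hw
      set f : ℕ → ℂ := fun n => (1 / ((n : ℂ) + 1) - τ ^ 2 / ((n : ℂ) + 3)) * w ^ (n + 1) with hf
      set b : ℝ → ℕ → ℝ := fun c n => c ^ (n+1) / (n+1) + x ^ 2 / 3 * c ^ (n+1) with hbdef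
      have hfb : ∀ n, ‖f n‖ ≤ b q n := by
        intro n
        have e1 : ‖1 / ((n : ℂ) + 1)‖ = 1 / ((n:ℝ)+1) := by
          rw [norm_div, norm_one]
          congr 1
          have : ((n : ℂ) + 1) = ((n+1 : ℕ) : ℂ) := by push_cast; ring
          rw [this, Complex.norm_natCast]; push_cast; ring
        have e2 : ‖τ ^ 2 / ((n : ℂ) + 3)‖ = x ^ 2 / ((n:ℝ)+3) := by
          rw [norm_div, norm_pow, ← hx]
          congr 1
          have : ((n : ℂ) + 3) = ((n+3 : ℕ) : ℂ) := by push_cast; ring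
          rw [this, Complex.norm_natCast]; push_cast; ring
        have hcoef : ‖1 / ((n : ℂ) + 1) - τ ^ 2 / ((n : ℂ) + 3)‖
            ≤ 1 / ((n:ℝ)+1) + x ^ 2 / 3 := by
          refine (norm_sub_le _ _).trans ?_
          rw [e1, e2]
          refine add_le_add le_rfl ?_
          apply div_le_div_of_nonneg_left (by positivity) (by norm_num) (by linarith [Nat.cast_nonneg (α := ℝ) n])
        have : ‖f n‖ = ‖1 / ((n : ℂ) + 1) - τ ^ 2 / ((n : ℂ) + 3)‖ * q ^ (n+1) := by
          rw [hf]
          simp only [norm_mul, norm_pow, hwabs]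
        rw [this, hbdef]
        have hqpow : (0:ℝ) ≤ q ^ (n+1) := by positivity
        calc _ ≤ (1 / ((n:ℝ)+1) + x ^ 2 / 3) * q ^ (n+1) := by gcongr
        _ = q ^ (n+1) / (n+1) + x ^ 2 / 3 * q ^ (n+1) := by ring
      have habs : |q| < 1 := by rw [_root_.abs_of_nonneg hq0]; exact hq1
      have h1 : HasSum (fun n : ℕ => q ^ (n+1) / (n+1)) (-Real.log (1 - q)) :=
        Real.hasSum_pow_div_log_of_abs_lt_one habs
      have h2 : HasSum (fun n : ℕ => x ^ 2 / 3 * q ^ (n+1)) (x ^ 2 / 3 * (q * (1-q)⁻¹)) := by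
        have := (hasSum_geometric_of_lt_one hq0 hq1).mul_left (x ^ 2 / 3 * q)
        simpa only [pow_succ', mul_assoc] using this
      have hb : HasSum (b q) (-Real.log (1 - q) + x ^ 2 / 3 * (q * (1-q)⁻¹)) := h1.add h2
      have hsf : Summable (fun n => ‖f n‖) :=
        Summable.of_nonneg_of_le (fun n => norm_nonneg _) hfb hb.summable
      have hS : ‖∑' n, f n‖ ≤ -Real.log (1 - q) + x ^ 2 / 3 * (q * (1-q)⁻¹) := by
        refine (norm_tsum_le_tsum_norm hsf).trans ?_
        rw [← hb.tsum_eq]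
        exact Summable.tsum_le_tsum hfb hsf hb.summable
      set L := -Real.log (1 - q) + x ^ 2 / 3 * (q * (1-q)⁻¹) with hL
      have hexp : ‖Complex.exp (∑' n, f n)‖ ≤ Real.exp L := by
        rw [Complex.norm_exp]
        exact Real.exp_le_exp.mpr ((Complex.re_le_norm _).trans hS)
      refine hexp.trans ?_
      -- now the real analysis
      have h1q : 0 < 1 - q := by linarith
      have e1q : 1 - q = (x ^ 3 - x + 1) / (x ^ 3 + 1) := by
        rw [hq, hr]; field_simp; ring
      set y := x ^ 2 / 3 * (q * (1-q)⁻¹) with hy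
      have ey : y = x ^ 3 / (3 * (x ^ 3 - x + 1)) := by
        rw [hy, e1q, hq, hr]; field_simp
      have hE : 0 < 2 * x ^ 3 - 3 * x + 3 := by nlinarith [sq_nonneg (x-1), sq_nonneg x]
      have h1y : 0 < 1 - y := by
        rw [ey, sub_pos, div_lt_one (by positivity)]
        nlinarith
      have hexpy : Real.exp y ≤ (1 - y)⁻¹ := by
        rw [le_inv_comm₀ (Real.exp_pos y) h1y, ← Real.exp_neg]
        linarith [Real.add_one_le_exp (-y)]
      have : Real.exp L = (1 - q)⁻¹ * Real.exp y := by
        rw [hL, Real.exp_add, Real.exp_neg, Real.exp_log h1q]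
      rw [this]
      calc (1 - q)⁻¹ * Real.exp y ≤ (1 - q)⁻¹ * (1 - y)⁻¹ := by
            gcongr
      _ ≤ 4 := by
          rw [e1q, ey]
          rw [show 1 - x ^ 3 / (3 * (x ^ 3 - x + 1)) = (2*x^3 - 3*x + 3) / (3 * (x ^ 3 - x + 1)) by
            rw [eq_div_iff (mul_pos three_pos hD).ne', sub_mul, div_mul_cancel₀ _ (mul_pos three_pos hD).ne']; ring]
          rw [inv_div, inv_div, div_mul_div_comm]
          rw [div_le_iff₀ (by positivity)]
          nlinarith [mul_nonneg hx0 (sq_nonneg (x-1)), sq_nonneg (x-1), sq_nonneg x, hD.le, hE.le]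
    rw [norm_div, norm_pow]
    have : ‖t‖ = r := htabs
    rw [this]
    have hrp : (0:ℝ) < r ^ (k+1) := by positivity
    rw [div_le_iff₀ hrp]
    calc _ ≤ (4:ℝ) := hnum
    _ ≤ 4 * (r ^ (k + 1))⁻¹ * r ^ (k + 1) := by
        rw [mul_assoc, inv_mul_cancel₀ hrp.ne', mul_one]
  have := circleIntegral.norm_two_pi_i_inv_smul_integral_le_of_norm_le_const hr0.le key
  rw [smul_eq_mul] at this
  calc ‖pFun k τ‖ ≤ r * (4 * (r ^ (k + 1))⁻¹) := this
    _ = 4 * (x ^ 3 + 1) ^ k := by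
        rw [hr]
        rw [inv_pow, inv_inv, pow_succ (x ^ 3 + 1) k, mul_comm (x ^ 3 + 1)⁻¹, mul_assoc, mul_assoc, mul_inv_cancel₀ hx1.ne', mul_one]
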